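/- For every natural number n ≥ 1 there exists a unique t ∈ (0,1) such that κ₁(t) = n. -/

import Mathlib

open Real

noncomputable def kappa1 (t : ℝ) : ℝ :=
  ∑' j : ℕ, ((j : ℝ) + 1) * t ^ (j + 1) / (1 - t ^ (j + 1))

namespace Kappa1Aux

lemma denom_pos {t : ℝ} (h0 : 0 ≤ t) (h1 : t < 1) (j : ℕ) : 0 < 1 - t ^ (j + 1) := by
  have : t ^ (j + 1) < 1 := pow_lt_one₀ h0 h1 (Nat.succ_ne_zero j)
  linarith

lemma pow_le_self {t : ℝ} (h0 : 0 ≤ t) (h1 : t < 1) (j : ℕ) : t ^ (j + 1) ≤ t :=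
  pow_le_of_le_one h0 h1.le (Nat.succ_ne_zero j)

lemma term_nonneg {t : ℝ} (h0 : 0 ≤ t) (h1 : t < 1) (j : ℕ) :
    0 ≤ ((j : ℝ) + 1) * t ^ (j + 1) / (1 - t ^ (j + 1)) :=
  div_nonneg (by positivity) (denom_pos h0 h1 j).le

lemma hasSum_aux {t : ℝ} (h0 : 0 ≤ t) (h1 : t < 1) :
    HasSum (fun j : ℕ => ((j : ℝ) + 1) * t ^ (j + 1)) (t / (1 - t) ^ 2) := by
  have h : HasSum (fun n : ℕ => (n : ℝ) * t ^ n) (t / (1 - t) ^ 2) :=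
    hasSum_coe_mul_geometric_of_norm_lt_one (by rwa [Real.norm_eq_abs, abs_of_nonneg h0])
  have h2 := (hasSum_nat_add_iff (f := fun n : ℕ => (n : ℝ) * t ^ n) 1).mpr (by simpa using h)
  convert h2 using 2 with j
  push_cast
  · rfl
  · push_cast; ring

lemma term_le {t : ℝ} (h0 : 0 ≤ t) (h1 : t < 1) (j : ℕ) :
    ((j : ℝ) + 1) * t ^ (j + 1) / (1 - t ^ (j + 1)) ≤ ((j : ℝ) + 1) * t ^ (j + 1) / (1 - t) :=
  div_le_div_of_nonneg_left (by positivity) (by linarith)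
    (by have := pow_le_self h0 h1 j; linarith)

lemma summable_aux {t : ℝ} (h0 : 0 ≤ t) (h1 : t < 1) :
    Summable (fun j : ℕ => ((j : ℝ) + 1) * t ^ (j + 1) / (1 - t ^ (j + 1))) :=
  Summable.of_nonneg_of_le (term_nonneg h0 h1) (term_le h0 h1)
    ((hasSum_aux h0 h1).summable.div_const (1 - t))

lemma strictMonoOn_kappa1 : StrictMonoOn kappa1 (Set.Ioo (0:ℝ) 1) := by
  intro s hs t ht hst
  unfold kappa1
  refine Summable.tsum_lt_tsum (i := 0) (fun j => ?_) ?_ (summable_aux hs.1.le hs.2)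
    (summable_aux ht.1.le ht.2)
  · have hpow : s ^ (j + 1) ≤ t ^ (j + 1) := pow_le_pow_left₀ hs.1.le hst.le _
    refine div_le_div₀ (mul_nonneg (by positivity) (pow_nonneg ht.1.le _)) ?_
      (denom_pos ht.1.le ht.2 j) (by linarith)
    have : (0:ℝ) ≤ (j : ℝ) + 1 := by positivity
    nlinarith
  · simp only [Nat.cast_zero, zero_add, pow_one, one_mul]
    rw [div_lt_div_iff₀ (by linarith [hs.2]) (by linarith [ht.2])]
    nlinarith [hs.1, ht.1, hst]

lemma contOn {r : ℝ} (hr0 : 0 ≤ r) (hr1 : r < 1) :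
    ContinuousOn kappa1 (Set.Icc 0 r) := by
  have hu : Summable (fun j : ℕ => ((j : ℝ) + 1) * r ^ (j + 1) / (1 - r)) :=
    (hasSum_aux hr0 hr1).summable.div_const (1 - r)
  have huni : TendstoUniformlyOn
      (fun (m : Finset ℕ) x => ∑ j ∈ m, ((j : ℝ) + 1) * x ^ (j + 1) / (1 - x ^ (j + 1)))
      (fun x => ∑' j : ℕ, ((j : ℝ) + 1) * x ^ (j + 1) / (1 - x ^ (j + 1)))
      Filter.atTop (Set.Icc 0 r) := tendstoUniformlyOn_tsum hu (fun j x hx => ?_)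
  · apply huni.continuousOn
    apply Filter.Eventually.frequently
    filter_upwards with m
    refine continuousOn_finset_sum _ fun j _ => ContinuousOn.div (by fun_prop) (by fun_prop)
      fun x hx => ne_of_gt (denom_pos hx.1 (lt_of_le_of_lt hx.2 hr1) j)
  · have hx0 := hx.1
    have hx1 : x < 1 := lt_of_le_of_lt hx.2 hr1
    rw [Real.norm_eq_abs, abs_of_nonneg (term_nonneg hx0 hx1 j)]
    have hpow : x ^ (j + 1) ≤ r ^ (j + 1) := pow_le_pow_left₀ hx0 hx.2 _
    refine div_le_div₀ (by positivity) ?_ (by linarith) ?_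
    · have : (0:ℝ) ≤ (j : ℝ) + 1 := by positivity
      nlinarith
    · have h1 := pow_le_self hx0 hx1 j
      linarith [hx.2]

lemma lower {t : ℝ} (h0 : 0 ≤ t) (h1 : t < 1) : t / (1 - t) ≤ kappa1 t := by
  have := Summable.le_tsum (summable_aux h0 h1) 0 (fun j _ => term_nonneg h0 h1 j)
  simpa [kappa1] using this

lemma upper {t : ℝ} (h0 : 0 ≤ t) (h1 : t < 1) :
    kappa1 t ≤ t / (1 - t) ^ 2 / (1 - t) := by
  have hg : (∑' j : ℕ, ((j : ℝ) + 1) * t ^ (j + 1) / (1 - t)) = t / (1 - t) ^ 2 / (1 - t) := by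
    rw [tsum_div_const, (hasSum_aux h0 h1).tsum_eq]
  rw [← hg]
  exact Summable.tsum_le_tsum (term_le h0 h1) (summable_aux h0 h1)
    ((hasSum_aux h0 h1).summable.div_const (1 - t))

end Kappa1Aux

open Kappa1Aux in
theorem stmt8 (n : ℕ) (hn : 1 ≤ n) :
    ∃! t : ℝ, t ∈ Set.Ioo (0 : ℝ) 1 ∧ kappa1 t = n := by
  have hn1 : (1:ℝ) ≤ n := by exact_mod_cast hn
  set a : ℝ := 1/10 with ha
  set b : ℝ := n / (n + 1) with hb
  have hnpos : (0:ℝ) < n + 1 := by positivity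
  have hb0 : 0 < b := by rw [hb]; positivity
  have hb1 : b < 1 := by rw [hb, div_lt_one hnpos]; linarith
  have hab : a ≤ b := by
    rw [ha, hb, div_le_div_iff₀ (by norm_num) hnpos]
    linarith
  have hka : kappa1 a ≤ (n:ℝ) := by
    have := upper (t := a) (by norm_num) (by norm_num)
    have h2 : a / (1 - a) ^ 2 / (1 - a) ≤ 1 := by rw [ha]; norm_num
    linarith
  have hkb : (n:ℝ) ≤ kappa1 b := by
    have := lower hb0.le hb1
    have h2 : b / (1 - b) = n := by
      rw [hb]
      field_simp
      ring
    linarith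
  have hmem : (n : ℝ) ∈ Set.Icc (kappa1 a) (kappa1 b) := ⟨hka, hkb⟩
  have hcont : ContinuousOn kappa1 (Set.Icc a b) :=
    (contOn hb0.le hb1).mono (Set.Icc_subset_Icc (by rw [ha]; norm_num) le_rfl)
  obtain ⟨t, ht, hteq⟩ := intermediate_value_Icc hab hcont hmem
  have htI : t ∈ Set.Ioo (0:ℝ) 1 :=
    ⟨lt_of_lt_of_le (by norm_num) ht.1, lt_of_le_of_lt ht.2 hb1⟩
  refine ⟨t, ⟨htI, hteq⟩, fun y hy => ?_⟩
  exact strictMonoOn_kappa1.injOn hy.1 htI (hy.2.trans hteq.symm)
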